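/- Cyclic two-fold symmetry: for positive integers w1, w2, w3, y ∈ R, n ≥ 0: Σ_{k+l+m=n} (n choose k,l,m) · B_{k,q^{w3}}(w1 y) · B_{l,q^{w1}}(w2 y) · B_{m,q^{w2}}(w3 y) · w3^k · w1^l · w2^m = Σ_{k+l+m=n} (n choose k,l,m) · B_{k,q^{w2}}(w1 y) · B_{l,q^{w1}}(w3 y) · B_{m,q^{w3}}(w2 y) · w2^k · w1^l · w3^m. -/

import Mathlib

open Finset
open Finset

/-- The q-analogue of power sums: `S_{k,q}(m) = Σ_{i=0}^m i^k q^i` (with `0^0 = 1`). -/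
def qS {R : Type*} [CommRing R] (q : R) (k m : ℕ) : R :=
  ∑ i ∈ Finset.range (m + 1), (i : R) ^ k * q ^ i

/-- q-Bernoulli numbers `b_n(q, L)`: `(q-1) b_0 = L` and for `n ≥ 1`,
`(q-1) b_n = [n = 1] - q Σ_{k<n} C(n,k) b_k`. -/
noncomputable def qb {R : Type*} [CommRing R] (q L : R) : ℕ → R
  | 0 => Ring.inverse (q - 1) * L
  | n + 1 =>
      Ring.inverse (q - 1) *
        ((if n + 1 = 1 then (1 : R) else 0) -
          q * ∑ k ∈ (Finset.range (n + 1)).attach,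
              ((n + 1).choose k.1 : R) * qb q L k.1)
  termination_by n => n
  decreasing_by exact Finset.mem_range.mp k.2

/-- q-Bernoulli polynomials `B_{n,q}(x) = Σ_{k=0}^n C(n,k) b_k(q,L) x^{n-k}`. -/
noncomputable def qB {R : Type*} [CommRing R] (q L : R) (n : ℕ) (x : R) : R :=
  ∑ k ∈ Finset.range (n + 1), (n.choose k : R) * qb q L k * x ^ (n - k)

section Aux

variable {R : Type*} [CommRing R]

lemma qb_zero' (q L : R) : qb q L 0 = Ring.inverse (q - 1) * L := by rw [qb]

lemma qb_succ' (q L : R) (n : ℕ) :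
    qb q L (n+1) = Ring.inverse (q - 1) *
      ((if n + 1 = 1 then (1:R) else 0) -
        q * ∑ k ∈ Finset.range (n+1), ((n+1).choose k : R) * qb q L k) := by
  rw [qb, Finset.sum_attach (Finset.range (n+1)) (fun k => ((n+1).choose k : R) * qb q L k)]

lemma qb_delta (q L : R) (hq : IsUnit (q - 1)) (n : ℕ) :
    q * ∑ k ∈ range (n+1), (n.choose k : R) * qb q L k
      = qb q L n + (if n = 1 then 1 else 0) + (if n = 0 then L else 0) := by
  cases n with
  | zero =>
      have h := Ring.mul_inverse_cancel _ hq
      rw [qb_zero']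
      simp only [zero_add, range_one, sum_singleton, Nat.choose_self, Nat.cast_one, one_mul,
        qb_zero']
      norm_num
      linear_combination L * h
  | succ m =>
      have h2 : (q - 1) * qb q L (m+1)
          = (if m + 1 = 1 then (1:R) else 0)
            - q * ∑ k ∈ range (m+1), ((m+1).choose k : R) * qb q L k := by
        rw [qb_succ', ← mul_assoc, Ring.mul_inverse_cancel _ hq, one_mul]
      rw [Finset.sum_range_succ]
      simp only [Nat.choose_self, Nat.cast_one, one_mul, if_neg (Nat.succ_ne_zero m), add_zero]
      linear_combination h2

lemma qb_unique (q L : R) (hq : IsUnit (q - 1)) (γ : ℕ → R)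
    (hγ : ∀ n, q * ∑ k ∈ range (n+1), (n.choose k : R) * γ k
      = γ n + (if n = 1 then 1 else 0) + (if n = 0 then L else 0)) :
    ∀ n, γ n = qb q L n := by
  intro n
  induction n using Nat.strong_induction_on with
  | _ n ih =>
    have h1 := hγ n
    have h2 := qb_delta q L hq n
    rw [Finset.sum_range_succ] at h1 h2
    have hs : ∑ k ∈ range n, (n.choose k : R) * γ k
        = ∑ k ∈ range n, (n.choose k : R) * qb q L k :=
      Finset.sum_congr rfl fun k hk => by rw [ih k (mem_range.mp hk)]
    rw [hs] at h1
    refine hq.mul_left_cancel ?_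
    simp only [Nat.choose_self, Nat.cast_one, one_mul] at h1 h2
    linear_combination h1 - h2

lemma choose_helper {n k j : ℕ} (h : k + j ≤ n) :
    n.choose k * (n-k).choose j = n.choose (k+j) * (k+j).choose k := by
  have h2 := Nat.choose_mul (n := n) (k := k + j) (s := k) (Nat.le_add_right _ _)
  rw [Nat.add_sub_cancel_left] at h2
  omega

lemma choose_helper2 {n k j : ℕ} (h : k + j ≤ n) :
    n.choose k * (n-k).choose j = n.choose j * (n-j).choose k := by
  rw [choose_helper h, choose_helper (by omega : j + k ≤ n)]
  have h3 : (k+j).choose k = (k+j).choose j := by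
    rw [← Nat.choose_symm (by omega : k ≤ k + j)]
    congr 1
    omega
  rw [Nat.add_comm j k, h3]

lemma tri_swap {M : Type*} [AddCommMonoid M] (n : ℕ) (f : ℕ → ℕ → M) :
    ∑ k ∈ range (n+1), ∑ j ∈ range (n-k+1), f k j
      = ∑ j ∈ range (n+1), ∑ k ∈ range (n-j+1), f k j :=
  Finset.sum_comm' (by intro x y; simp only [mem_range]; omega)

lemma qB_add (q L : R) (n : ℕ) (x z : R) :
    qB q L n (x + z) = ∑ k ∈ range (n+1), (n.choose k : R) * qB q L k x * z ^ (n-k) :=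
  calc qB q L n (x+z)
      = ∑ k ∈ range (n+1), ∑ j ∈ range (n-k+1),
          (n.choose k : R) * qb q L k * (x^j*z^(n-k-j)*((n-k).choose j:R)) := by
        rw [qB]; exact Finset.sum_congr rfl fun k _ => by rw [add_pow, Finset.mul_sum]
    _ = ∑ k ∈ range (n+1), ∑ i ∈ range (k+1),
          (n.choose k : R) * ((k.choose i : R) * qb q L i * x^(k-i)) * z^(n-k) := by
        rw [Finset.sum_sigma' (range (n+1)), Finset.sum_sigma' (range (n+1))]
        refine Finset.sum_nbij' (fun a => ⟨a.1+a.2, a.1⟩) (fun a => ⟨a.2, a.1 - a.2⟩)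
          ?_ ?_ ?_ ?_ ?_
        · rintro ⟨k,j⟩ ha
          simp only [mem_sigma, mem_range] at *
          omega
        · rintro ⟨k,i⟩ ha
          simp only [mem_sigma, mem_range] at *
          omega
        · rintro ⟨k,j⟩ ha
          dsimp only
          have e : k + j - k = j := by omega
          rw [e]
        · rintro ⟨k,i⟩ ha
          simp only [mem_sigma, mem_range] at ha
          dsimp only
          have e : i + (k - i) = k := by omega
          rw [e]
        · rintro ⟨k,j⟩ ha
          simp only [mem_sigma, mem_range] at ha
          have hc : ((n.choose k : ℕ) : R) * ((n-k).choose j : R)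
              = (n.choose (k+j) : R) * ((k+j).choose k : R) := by
            exact_mod_cast congrArg (Nat.cast : ℕ → R) (choose_helper (by omega))
          have e1 : k + j - k = j := by omega
          have e2 : n - k - j = n - (k+j) := by omega
          simp only [e1, e2]
          linear_combination (qb q L k * x^j * z^(n-(k+j))) * hc
    _ = ∑ k ∈ range (n+1), (n.choose k : R) * qB q L k x * z ^ (n-k) :=
        Finset.sum_congr rfl fun k _ => by rw [qB, Finset.mul_sum, Finset.sum_mul]

lemma qB_zero_right (q L : R) (n : ℕ) : qB q L n 0 = qb q L n := by
  rw [qB, Finset.sum_eq_single_of_mem n (self_mem_range_succ n)]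
  · simp
  · intro k hk hkn
    have : n - k ≠ 0 := by simp only [mem_range] at hk; omega
    simp [zero_pow this]

lemma qB_one_right (q L : R) (n : ℕ) :
    qB q L n 1 = ∑ k ∈ range (n+1), (n.choose k : R) * qb q L k := by
  rw [qB]; simp

end Aux

section Aux2
variable {R : Type*} [CommRing R]

lemma qB_def (P Λ : R) (N : ℕ) (v : R) :
    qB P Λ N v = ∑ j ∈ range (N+1), (N.choose j : R) * qb P Λ j * v^(N-j) := rfl

lemma S2 (P Λ : R) (m : ℕ) (x z : R) :
    ∑ k ∈ range (m+1), (m.choose k : R) * qB P Λ k x * qB P Λ (m-k) z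
      = ∑ k ∈ range (m+1), (m.choose k : R) * qb P Λ k * qB P Λ (m-k) (x+z) :=
  calc ∑ k ∈ range (m+1), (m.choose k : R) * qB P Λ k x * qB P Λ (m-k) z
      = ∑ k ∈ range (m+1), ∑ j ∈ range (m-k+1),
          ((m.choose k : R) * ((m-k).choose j : R)) * qB P Λ k x * qb P Λ j * z^(m-k-j) := by
        refine Finset.sum_congr rfl fun k _ => ?_
        rw [qB_def P Λ (m-k) z, Finset.mul_sum]
        exact Finset.sum_congr rfl fun j _ => by ring
    _ = ∑ j ∈ range (m+1), ∑ k ∈ range (m-j+1),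
          ((m.choose k : R) * ((m-k).choose j : R)) * qB P Λ k x * qb P Λ j * z^(m-k-j) :=
        tri_swap m _
    _ = ∑ j ∈ range (m+1), (m.choose j : R) * qb P Λ j * qB P Λ (m-j) (x+z) := by
        refine Finset.sum_congr rfl fun j hj => ?_
        rw [qB_add, Finset.mul_sum]
        refine Finset.sum_congr rfl fun k hk => ?_
        simp only [mem_range] at hj hk
        have hc : ((m.choose k : ℕ) : R) * ((m-k).choose j : R)
            = (m.choose j : R) * ((m-j).choose k : R) := by
          exact_mod_cast congrArg (Nat.cast : ℕ → R) (choose_helper2 (by omega : k + j ≤ m))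
        have e2 : m - k - j = m - j - k := by omega
        rw [e2]
        linear_combination (qB P Λ k x * qb P Λ j * z^(m-j-k)) * hc

lemma Tsum (P Λ : R) (n : ℕ) (a b c : R) :
    ∑ k ∈ range (n+1), ∑ l ∈ range (n-k+1),
        ((n.choose k : R) * ((n-k).choose l : R)) * qB P Λ k a * qB P Λ l b * qB P Λ (n-k-l) c
      = ∑ k ∈ range (n+1), ∑ l ∈ range (n-k+1),
        ((n.choose k : R) * ((n-k).choose l : R)) * qb P Λ k * qb P Λ l * qB P Λ (n-k-l) (a+b+c) :=
  calc ∑ k ∈ range (n+1), ∑ l ∈ range (n-k+1),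
        ((n.choose k : R) * ((n-k).choose l : R)) * qB P Λ k a * qB P Λ l b * qB P Λ (n-k-l) c
      = ∑ k ∈ range (n+1), ∑ l ∈ range (n-k+1),
          ((n.choose k : R) * ((n-k).choose l : R)) * qB P Λ k a * qb P Λ l
            * qB P Λ (n-k-l) (b+c) := by
        refine Finset.sum_congr rfl fun k _ => ?_
        have h := S2 P Λ (n-k) b c
        calc ∑ l ∈ range (n-k+1),
              ((n.choose k : R) * ((n-k).choose l : R)) * qB P Λ k a * qB P Λ l b
                * qB P Λ (n-k-l) c
            = ((n.choose k : R) * qB P Λ k a)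
                * ∑ l ∈ range (n-k+1), ((n-k).choose l : R) * qB P Λ l b * qB P Λ (n-k-l) c := by
              rw [Finset.mul_sum]; exact Finset.sum_congr rfl fun l _ => by ring
          _ = ((n.choose k : R) * qB P Λ k a)
                * ∑ l ∈ range (n-k+1), ((n-k).choose l : R) * qb P Λ l
                    * qB P Λ (n-k-l) (b+c) := by rw [h]
          _ = ∑ l ∈ range (n-k+1),
                ((n.choose k : R) * ((n-k).choose l : R)) * qB P Λ k a * qb P Λ l
                  * qB P Λ (n-k-l) (b+c) := by
              rw [Finset.mul_sum]; exact Finset.sum_congr rfl fun l _ => by ring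
    _ = ∑ l ∈ range (n+1), ∑ k ∈ range (n-l+1),
          ((n.choose k : R) * ((n-k).choose l : R)) * qB P Λ k a * qb P Λ l
            * qB P Λ (n-k-l) (b+c) := tri_swap n _
    _ = ∑ l ∈ range (n+1), ((n.choose l : R) * qb P Λ l)
          * ∑ k ∈ range (n-l+1), ((n-l).choose k : R) * qB P Λ k a * qB P Λ (n-l-k) (b+c) := by
        refine Finset.sum_congr rfl fun l hl => ?_
        rw [Finset.mul_sum]
        refine Finset.sum_congr rfl fun k hk => ?_
        simp only [mem_range] at hl hk
        have hc : ((n.choose k : ℕ) : R) * ((n-k).choose l : R)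
            = (n.choose l : R) * ((n-l).choose k : R) := by
          exact_mod_cast congrArg (Nat.cast : ℕ → R) (choose_helper2 (by omega : k + l ≤ n))
        have e2 : n - k - l = n - l - k := by omega
        rw [e2]
        linear_combination (qB P Λ k a * qb P Λ l * qB P Λ (n-l-k) (b+c)) * hc
    _ = ∑ l ∈ range (n+1), ((n.choose l : R) * qb P Λ l)
          * ∑ k ∈ range (n-l+1), ((n-l).choose k : R) * qb P Λ k * qB P Λ (n-l-k) (a+(b+c)) := by
        refine Finset.sum_congr rfl fun l _ => ?_
        rw [S2 P Λ (n-l) a (b+c)]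
    _ = ∑ k ∈ range (n+1), ∑ l ∈ range (n-k+1),
          ((n.choose k : R) * ((n-k).choose l : R)) * qb P Λ k * qb P Λ l
            * qB P Λ (n-k-l) (a+b+c) := by
        simp only [add_assoc]
        refine Finset.sum_congr rfl fun k _ => ?_
        rw [Finset.mul_sum]
        exact Finset.sum_congr rfl fun l _ => by ring

end Aux2

section Mult
variable {R : Type*} [CommRing R] [Algebra ℚ R]

lemma qb_mult (p Λ : R) (hp : IsUnit (p - 1)) (d : ℕ) (hd : 0 < d)
    (hpd : IsUnit (p^d - 1)) (n : ℕ) :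
    (d:R) * qb p Λ n
      = (d:R)^n * ∑ i ∈ range d, p^i * qB (p^d) ((d:R)*Λ) n (algebraMap ℚ R ((i:ℚ) / d)) := by
  have hd0 : (d:ℚ) ≠ 0 := Nat.cast_ne_zero.mpr hd.ne'
  set u : ℚ →+* R := (algebraMap ℚ R : ℚ →+* R) with hu
  set γ : ℕ → R := fun m =>
    u ((d:ℚ)^m / d) * ∑ i ∈ range d, p^i * qB (p^d) ((d:R)*Λ) m (u ((i:ℚ)/d)) with hγdef
  have key : ∀ (m : ℕ) (i : ℕ),
      ∑ k ∈ range (m+1), (m.choose k : R)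
          * (u ((d:ℚ)^k / d) * qB (p^d) ((d:R)*Λ) k (u ((i:ℚ)/d)))
        = u ((d:ℚ)^m/d) * qB (p^d) ((d:R)*Λ) m (u (((i:ℚ)+1)/d)) := by
    intro m i
    have harg : u (((i:ℚ)+1)/d) = u ((i:ℚ)/d) + u (1/(d:ℚ)) := by
      rw [← map_add]
      congr 1
      field_simp
    rw [harg, qB_add, Finset.mul_sum]
    refine Finset.sum_congr rfl fun k hk => ?_
    simp only [mem_range] at hk
    have hk' : ((d:ℚ)^m/d) * (1/d)^(m-k) = (d:ℚ)^k/d := by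
      have hpow : (d:ℚ)^m = (d:ℚ)^k * (d:ℚ)^(m-k) := by
        rw [← pow_add]; congr 1; omega
      have hne : (d:ℚ)^(m-k) ≠ 0 := pow_ne_zero _ hd0
      rw [hpow, one_div, inv_pow, div_mul_eq_mul_div, mul_assoc, mul_inv_cancel₀ hne, mul_one]
    calc (m.choose k : R) * (u ((d:ℚ)^k / d) * qB (p^d) ((d:R)*Λ) k (u ((i:ℚ)/d)))
        = (m.choose k : R) * (u (((d:ℚ)^m/d) * (1/d)^(m-k)) * qB (p^d) ((d:R)*Λ) k (u ((i:ℚ)/d))) := by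
          rw [hk']
      _ = u ((d:ℚ)^m/d) * ((m.choose k : R) * qB (p^d) ((d:R)*Λ) k (u ((i:ℚ)/d)) * (u (1/(d:ℚ)))^(m-k)) := by
          rw [map_mul, map_pow]; ring
  have hγ : ∀ m, p * ∑ k ∈ range (m+1), (m.choose k : R) * γ k
      = γ m + (if m = 1 then 1 else 0) + (if m = 0 then Λ else 0) := by
    intro m
    have step1 : ∑ k ∈ range (m+1), (m.choose k : R) * γ k
        = ∑ i ∈ range d, p^i * (u ((d:ℚ)^m/d) * qB (p^d) ((d:R)*Λ) m (u (((i:ℚ)+1)/d))) := by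
      calc ∑ k ∈ range (m+1), (m.choose k : R) * γ k
          = ∑ k ∈ range (m+1), ∑ i ∈ range d,
              p^i * ((m.choose k : R) * (u ((d:ℚ)^k / d) * qB (p^d) ((d:R)*Λ) k (u ((i:ℚ)/d)))) := by
            refine Finset.sum_congr rfl fun k _ => ?_
            rw [hγdef]
            dsimp only
            rw [Finset.mul_sum, Finset.mul_sum]
            exact Finset.sum_congr rfl fun i _ => by ring
        _ = ∑ i ∈ range d, ∑ k ∈ range (m+1),
              p^i * ((m.choose k : R) * (u ((d:ℚ)^k / d) * qB (p^d) ((d:R)*Λ) k (u ((i:ℚ)/d)))) :=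
            Finset.sum_comm
        _ = ∑ i ∈ range d, p^i * (u ((d:ℚ)^m/d) * qB (p^d) ((d:R)*Λ) m (u (((i:ℚ)+1)/d))) := by
            refine Finset.sum_congr rfl fun i _ => ?_
            rw [← Finset.mul_sum, key m i]
    have tele : ∑ i ∈ range d,
          (p^(i+1) * (u ((d:ℚ)^m/d) * qB (p^d) ((d:R)*Λ) m (u (((i:ℚ)+1)/d)))
            - p^i * (u ((d:ℚ)^m/d) * qB (p^d) ((d:R)*Λ) m (u ((i:ℚ)/d))))
        = p^d * (u ((d:ℚ)^m/d) * qB (p^d) ((d:R)*Λ) m (u ((d:ℚ)/d)))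
          - p^0 * (u ((d:ℚ)^m/d) * qB (p^d) ((d:R)*Λ) m (u ((0:ℚ)/d))) := by
      have t0 := Finset.sum_range_sub
        (f := fun i : ℕ => p^i * (u ((i:ℚ)/(d:ℚ)) |> (fun z => p^i * z)) ) d
      clear t0
      have t1 := Finset.sum_range_sub
        (f := fun i : ℕ => p^i * (u ((d:ℚ)^m/d) * qB (p^d) ((d:R)*Λ) m (u ((i:ℚ)/d)))) d
      have t2 : ∑ i ∈ range d,
          (p^(i+1) * (u ((d:ℚ)^m/d) * qB (p^d) ((d:R)*Λ) m (u (((i:ℚ)+1)/d)))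
            - p^i * (u ((d:ℚ)^m/d) * qB (p^d) ((d:R)*Λ) m (u ((i:ℚ)/d))))
          = ∑ i ∈ range d,
            ((fun i : ℕ => p^i * (u ((d:ℚ)^m/d) * qB (p^d) ((d:R)*Λ) m (u ((i:ℚ)/d)))) (i+1)
              - (fun i : ℕ => p^i * (u ((d:ℚ)^m/d) * qB (p^d) ((d:R)*Λ) m (u ((i:ℚ)/d)))) i) := by
        refine Finset.sum_congr rfl fun i _ => ?_
        push_cast
        ring_nf
      rw [t2, t1]
      push_cast
      ring_nf
    have hend : p^d * qB (p^d) ((d:R)*Λ) m 1 - qB (p^d) ((d:R)*Λ) m 0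
        = (if m = 1 then 1 else 0) + (if m = 0 then (d:R)*Λ else 0) := by
      rw [qB_one_right, qB_zero_right]
      have := qb_delta (p^d) ((d:R)*Λ) hpd m
      linear_combination this
    have hdd : u ((d:ℚ)/d) = 1 := by rw [div_self hd0, map_one]
    have h0d : u ((0:ℚ)/d) = 0 := by rw [zero_div, map_zero]
    rw [step1, hγdef]
    dsimp only
    rw [Finset.mul_sum]
    have lhs_eq : ∑ i ∈ range d,
          p * (p^i * (u ((d:ℚ)^m/d) * qB (p^d) ((d:R)*Λ) m (u (((i:ℚ)+1)/d))))
        = ∑ i ∈ range d,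
            (p^(i+1) * (u ((d:ℚ)^m/d) * qB (p^d) ((d:R)*Λ) m (u (((i:ℚ)+1)/d)))) :=
      Finset.sum_congr rfl fun i _ => by ring
    rw [lhs_eq]
    have split := Finset.sum_sub_distrib (s := range d)
      (f := fun i : ℕ => p^(i+1) * (u ((d:ℚ)^m/d) * qB (p^d) ((d:R)*Λ) m (u (((i:ℚ)+1)/d))))
      (g := fun i : ℕ => p^i * (u ((d:ℚ)^m/d) * qB (p^d) ((d:R)*Λ) m (u ((i:ℚ)/d))))
    rw [hdd, h0d] at tele
    -- combine: Σ p^{i+1}... = Σ p^i ... + (p^d * ... - ...)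
    have hinv : u (1/(d:ℚ)) * (d:R) = 1 := by
      have hcast : ((d:ℕ):R) = u ((d:ℕ):ℚ) := (map_natCast u d).symm
      rw [hcast, ← map_mul, one_div, inv_mul_cancel₀ hd0, map_one]
    have final : u ((d:ℚ)^m/d) * ((if m = 1 then 1 else 0) + (if m = 0 then (d:R)*Λ else 0))
        = (if m = 1 then 1 else 0) + (if m = 0 then Λ else 0) := by
      rcases m with _ | _ | m
      · simp only [if_neg (by norm_num : (0:ℕ) ≠ 1), if_pos rfl, pow_zero, zero_add, if_true]
        linear_combination Λ * hinv - Λ * u ((1:ℚ)/d) * ((d:R)) + Λ * u (1/(d:ℚ)) * ((d:R))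
      · simp only [if_pos rfl, if_neg (by norm_num : (1:ℕ) ≠ 0)]
        rw [pow_one, div_self hd0, map_one]
        ring
      · simp only [if_neg (by omega : m + 1 + 1 ≠ 1), if_neg (by omega : m + 1 + 1 ≠ 0)]
        ring
    calc ∑ i ∈ range d, (p^(i+1) * (u ((d:ℚ)^m/d) * qB (p^d) ((d:R)*Λ) m (u (((i:ℚ)+1)/d))))
        = ∑ i ∈ range d, p^i * (u ((d:ℚ)^m/d) * qB (p^d) ((d:R)*Λ) m (u ((i:ℚ)/d)))
          + (p^d * (u ((d:ℚ)^m/d) * qB (p^d) ((d:R)*Λ) m 1)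
             - p^0 * (u ((d:ℚ)^m/d) * qB (p^d) ((d:R)*Λ) m 0)) := by
          rw [← tele]
          rw [split]
          ring
      _ = u ((d:ℚ)^m/d) * (∑ i ∈ range d, p^i * qB (p^d) ((d:R)*Λ) m (u ((i:ℚ)/d)))
          + (if m = 1 then 1 else 0) + (if m = 0 then Λ else 0) := by
          have hms : ∑ i ∈ range d, p^i * (u ((d:ℚ)^m/d) * qB (p^d) ((d:R)*Λ) m (u ((i:ℚ)/d)))
              = u ((d:ℚ)^m/d) * ∑ i ∈ range d, p^i * qB (p^d) ((d:R)*Λ) m (u ((i:ℚ)/d)) := by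
            rw [Finset.mul_sum]; exact Finset.sum_congr rfl fun i _ => by ring
          rw [hms]
          linear_combination u ((d:ℚ)^m/d) * hend + final
  have huniq := qb_unique p Λ hp γ hγ n
  rw [← huniq, hγdef]
  dsimp only
  rw [← mul_assoc]
  congr 1
  have h1 : (d:R) = u ((d:ℕ):ℚ) := (map_natCast u d).symm
  rw [h1, ← map_pow, ← map_mul]
  congr 1
  field_simp


lemma qB_mult (p Λ : R) (hp : IsUnit (p-1)) (d : ℕ) (hd : 0 < d)
    (hpd : IsUnit (p^d - 1)) (n : ℕ) (x : R) :
    (d:R) * qB p Λ n ((d:R) * x)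
      = (d:R)^n * ∑ i ∈ range d, p^i
          * qB (p^d) ((d:R)*Λ) n (x + algebraMap ℚ R ((i:ℚ)/d)) := by
  set u : ℚ →+* R := (algebraMap ℚ R : ℚ →+* R) with hu
  calc (d:R) * qB p Λ n ((d:R)*x)
      = ∑ k ∈ range (n+1), (n.choose k : R) * ((d:R) * qb p Λ k)
          * ((d:R)^(n-k) * x^(n-k)) := by
        rw [qB_def, Finset.mul_sum]
        exact Finset.sum_congr rfl fun k _ => by rw [mul_pow]; ring
    _ = ∑ k ∈ range (n+1), (n.choose k : R)
          * ((d:R)^k * ∑ i ∈ range d, p^i * qB (p^d) ((d:R)*Λ) k (u ((i:ℚ)/d)))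
          * ((d:R)^(n-k) * x^(n-k)) :=
        Finset.sum_congr rfl fun k _ => by rw [qb_mult p Λ hp d hd hpd k]
    _ = ∑ k ∈ range (n+1), ∑ i ∈ range d,
          p^i * ((d:R)^n * ((n.choose k : R) * qB (p^d) ((d:R)*Λ) k (u ((i:ℚ)/d)) * x^(n-k))) := by
        refine Finset.sum_congr rfl fun k hk => ?_
        simp only [mem_range] at hk
        have hdk : (d:R)^k * (d:R)^(n-k) = (d:R)^n := by rw [← pow_add]; congr 1; omega
        rw [show (n.choose k : R)
              * ((d:R)^k * ∑ i ∈ range d, p^i * qB (p^d) ((d:R)*Λ) k (u ((i:ℚ)/d)))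
              * ((d:R)^(n-k) * x^(n-k))
            = (∑ i ∈ range d, p^i * qB (p^d) ((d:R)*Λ) k (u ((i:ℚ)/d)))
              * ((n.choose k : R) * ((d:R)^k*(d:R)^(n-k)) * x^(n-k)) from by ring,
          hdk, Finset.sum_mul]
        exact Finset.sum_congr rfl fun i _ => by ring
    _ = ∑ i ∈ range d, ∑ k ∈ range (n+1),
          p^i * ((d:R)^n * ((n.choose k : R) * qB (p^d) ((d:R)*Λ) k (u ((i:ℚ)/d)) * x^(n-k))) :=
        Finset.sum_comm
    _ = (d:R)^n * ∑ i ∈ range d, p^i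
          * qB (p^d) ((d:R)*Λ) n (x + u ((i:ℚ)/d)) := by
        rw [Finset.mul_sum]
        refine Finset.sum_congr rfl fun i _ => ?_
        rw [← Finset.mul_sum, ← Finset.mul_sum]
        rw [add_comm x, qB_add]
        ring

end Mult

section Main
variable {R : Type*} [CommRing R] [Algebra ℚ R]

lemma mul_sum3 {ι κ ν : Type*} (s : Finset ι) (t : Finset κ) (r : Finset ν)
    (c : R) (f : ι → R) (g : κ → R) (e : ν → R) :
    c * (∑ i ∈ s, f i) * (∑ j ∈ t, g j) * (∑ h ∈ r, e h)
      = ∑ i ∈ s, ∑ j ∈ t, ∑ h ∈ r, c * f i * g j * e h := by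
  rw [show c * (∑ i ∈ s, f i) * (∑ j ∈ t, g j) * (∑ h ∈ r, e h)
      = (∑ i ∈ s, f i) * ((∑ j ∈ t, g j) * ((∑ h ∈ r, e h) * c)) from by ring,
    Finset.sum_mul]
  refine Finset.sum_congr rfl fun i _ => ?_
  rw [show f i * ((∑ j ∈ t, g j) * ((∑ h ∈ r, e h) * c))
      = (∑ j ∈ t, g j) * ((∑ h ∈ r, e h) * (c * f i)) from by ring, Finset.sum_mul]
  refine Finset.sum_congr rfl fun j _ => ?_
  rw [show g j * ((∑ h ∈ r, e h) * (c * f i))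
      = (∑ h ∈ r, e h) * (c * f i * g j) from by ring, Finset.sum_mul]
  exact Finset.sum_congr rfl fun h _ => by ring

lemma swap5 {M : Type*} [AddCommMonoid M] (n a b c : ℕ) (f : ℕ → ℕ → ℕ → ℕ → ℕ → M) :
    ∑ k ∈ range (n+1), ∑ l ∈ range (n-k+1), ∑ i ∈ range a, ∑ j ∈ range b, ∑ h ∈ range c,
        f k l i j h
      = ∑ i ∈ range a, ∑ j ∈ range b, ∑ h ∈ range c, ∑ k ∈ range (n+1), ∑ l ∈ range (n-k+1),
          f k l i j h := by
  have flat : ∀ (g : ℕ → ℕ → M),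
      ∑ k ∈ range (n+1), ∑ l ∈ range (n-k+1), g k l
        = ∑ p ∈ (range (n+1)).sigma (fun k => range (n-k+1)), g p.1 p.2 :=
    fun g => (Finset.sum_sigma (range (n+1)) (fun k => range (n-k+1))
      (fun p => g p.1 p.2)).symm
  rw [flat (fun k l => ∑ i ∈ range a, ∑ j ∈ range b, ∑ h ∈ range c, f k l i j h)]
  have : ∀ i ∈ range a, ∀ j ∈ range b, ∀ h ∈ range c, True := fun _ _ _ _ _ _ => trivial
  calc ∑ p ∈ (range (n+1)).sigma (fun k => range (n-k+1)),
          ∑ i ∈ range a, ∑ j ∈ range b, ∑ h ∈ range c, f p.1 p.2 i j h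
      = ∑ i ∈ range a, ∑ p ∈ (range (n+1)).sigma (fun k => range (n-k+1)),
          ∑ j ∈ range b, ∑ h ∈ range c, f p.1 p.2 i j h := Finset.sum_comm
    _ = ∑ i ∈ range a, ∑ j ∈ range b, ∑ p ∈ (range (n+1)).sigma (fun k => range (n-k+1)),
          ∑ h ∈ range c, f p.1 p.2 i j h :=
        Finset.sum_congr rfl fun i _ => Finset.sum_comm
    _ = ∑ i ∈ range a, ∑ j ∈ range b, ∑ h ∈ range c,
          ∑ p ∈ (range (n+1)).sigma (fun k => range (n-k+1)), f p.1 p.2 i j h :=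
        Finset.sum_congr rfl fun i _ => Finset.sum_congr rfl fun j _ => Finset.sum_comm
    _ = ∑ i ∈ range a, ∑ j ∈ range b, ∑ h ∈ range c,
          ∑ k ∈ range (n+1), ∑ l ∈ range (n-k+1), f k l i j h :=
        Finset.sum_congr rfl fun i _ => Finset.sum_congr rfl fun j _ =>
          Finset.sum_congr rfl fun h _ => (flat (fun k l => f k l i j h)).symm


lemma fac (q L y : R) (W : ℕ) (hWpos : 0 < W) (hq : ∀ w : ℕ, 0 < w → IsUnit (q ^ w - 1))
    (a b c : ℕ) (ha : 0 < a) (hb : 0 < b) (hc : 0 < c) (habc : c*(a*b) = W) (k : ℕ) :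
    ((a*b : ℕ):R) * qB (q^c) ((c:R)*L) k ((a:R)*y)
      = ((a*b:ℕ):R)^k * ∑ i ∈ range (a*b), (q^c)^i
          * qB (q^W) (((W:ℕ):R)*L) k
              (algebraMap ℚ R (1/(b:ℚ)) * y + algebraMap ℚ R ((i:ℚ)/((a*b:ℕ):ℚ))) := by
  have hb0 : (b:ℚ) ≠ 0 := Nat.cast_ne_zero.mpr hb.ne'
  have hab : 0 < a*b := Nat.mul_pos ha hb
  have hup : IsUnit ((q^c)^(a*b) - 1) := by
    rw [← pow_mul, habc]; exact hq W hWpos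
  have h1 := qB_mult (q^c) ((c:R)*L) (hq c hc) (a*b) hab hup k (algebraMap ℚ R (1/(b:ℚ)) * y)
  have e1 : ((a*b:ℕ):R) * (algebraMap ℚ R (1/(b:ℚ)) * y) = (a:R)*y := by
    have hcast : ((a*b:ℕ):R) = algebraMap ℚ R ((a*b:ℕ):ℚ) := (map_natCast _ _).symm
    rw [hcast, ← mul_assoc, ← map_mul]
    have e : ((a*b:ℕ):ℚ) * (1/(b:ℚ)) = ((a:ℕ):ℚ) := by push_cast; field_simp
    rw [e, map_natCast]
  have e2 : (q^c)^(a*b) = q^W := by rw [← pow_mul, habc]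
  have e3 : ((a*b:ℕ):R) * ((c:R)*L) = ((W:ℕ):R)*L := by
    rw [← mul_assoc]
    congr 1
    rw [← habc]; push_cast; ring
  rw [e1, e2, e3] at h1
  exact h1

lemma side (q L y : R) (hq : ∀ w : ℕ, 0 < w → IsUnit (q ^ w - 1)) (n : ℕ)
    (W : ℕ) (hWpos : 0 < W)
    (a1 b1 c1 a2 b2 c2 a3 b3 c3 : ℕ)
    (ha1 : 0 < a1) (hb1 : 0 < b1) (hc1 : 0 < c1)
    (ha2 : 0 < a2) (hb2 : 0 < b2) (hc2 : 0 < c2)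
    (ha3 : 0 < a3) (hb3 : 0 < b3) (hc3 : 0 < c3)
    (h1 : c1*(a1*b1) = W) (h2 : c2*(a2*b2) = W) (h3 : c3*(a3*b3) = W) :
    ((a1*b1:ℕ):R) * ((a2*b2:ℕ):R) * ((a3*b3:ℕ):R) *
      ∑ k ∈ range (n+1), ∑ l ∈ range (n-k+1),
        ((n.choose k : R) * ((n-k).choose l : R)) *
          qB (q^c1) ((c1:R)*L) k ((a1:R)*y) *
          qB (q^c2) ((c2:R)*L) l ((a2:R)*y) *
          qB (q^c3) ((c3:R)*L) (n-k-l) ((a3:R)*y) *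
          (c1:R)^k * (c2:R)^l * (c3:R)^(n-k-l)
    = ((W:ℕ):R)^n * ∑ i ∈ range (a1*b1), ∑ j ∈ range (a2*b2), ∑ h ∈ range (a3*b3),
        q^(c1*i + c2*j + c3*h) *
          ∑ k ∈ range (n+1), ∑ l ∈ range (n-k+1),
            ((n.choose k : R) * ((n-k).choose l : R)) * qb (q^W) (((W:ℕ):R)*L) k
              * qb (q^W) (((W:ℕ):R)*L) l
              * qB (q^W) (((W:ℕ):R)*L) (n-k-l)
                  (algebraMap ℚ R (1/(b1:ℚ) + 1/(b2:ℚ) + 1/(b3:ℚ)) * y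
                    + algebraMap ℚ R (((c1*i + c2*j + c3*h : ℕ):ℚ)/((W:ℕ):ℚ))) := by
  have hc1Q : (c1:ℚ) ≠ 0 := Nat.cast_ne_zero.mpr hc1.ne'
  have hc2Q : (c2:ℚ) ≠ 0 := Nat.cast_ne_zero.mpr hc2.ne'
  have hc3Q : (c3:ℚ) ≠ 0 := Nat.cast_ne_zero.mpr hc3.ne'
  calc ((a1*b1:ℕ):R) * ((a2*b2:ℕ):R) * ((a3*b3:ℕ):R) *
      ∑ k ∈ range (n+1), ∑ l ∈ range (n-k+1),
        ((n.choose k : R) * ((n-k).choose l : R)) *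
          qB (q^c1) ((c1:R)*L) k ((a1:R)*y) *
          qB (q^c2) ((c2:R)*L) l ((a2:R)*y) *
          qB (q^c3) ((c3:R)*L) (n-k-l) ((a3:R)*y) *
          (c1:R)^k * (c2:R)^l * (c3:R)^(n-k-l)
      = ∑ k ∈ range (n+1), ∑ l ∈ range (n-k+1),
          ((a1*b1:ℕ):R) * ((a2*b2:ℕ):R) * ((a3*b3:ℕ):R) *
            (((n.choose k : R) * ((n-k).choose l : R)) *
              qB (q^c1) ((c1:R)*L) k ((a1:R)*y) *
              qB (q^c2) ((c2:R)*L) l ((a2:R)*y) *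
              qB (q^c3) ((c3:R)*L) (n-k-l) ((a3:R)*y) *
              (c1:R)^k * (c2:R)^l * (c3:R)^(n-k-l)) := by
        rw [Finset.mul_sum]
        exact Finset.sum_congr rfl fun k _ => Finset.mul_sum _ _ _
    _ = ∑ k ∈ range (n+1), ∑ l ∈ range (n-k+1),
          ((W:ℕ):R)^n * (((n.choose k : R) * ((n-k).choose l : R))
            * (∑ i ∈ range (a1*b1), (q^c1)^i * qB (q^W) (((W:ℕ):R)*L) k
                (algebraMap ℚ R (1/(b1:ℚ)) * y + algebraMap ℚ R ((i:ℚ)/((a1*b1:ℕ):ℚ))))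
            * (∑ j ∈ range (a2*b2), (q^c2)^j * qB (q^W) (((W:ℕ):R)*L) l
                (algebraMap ℚ R (1/(b2:ℚ)) * y + algebraMap ℚ R ((j:ℚ)/((a2*b2:ℕ):ℚ))))
            * (∑ h ∈ range (a3*b3), (q^c3)^h * qB (q^W) (((W:ℕ):R)*L) (n-k-l)
                (algebraMap ℚ R (1/(b3:ℚ)) * y + algebraMap ℚ R ((h:ℚ)/((a3*b3:ℕ):ℚ))))) := by
        refine Finset.sum_congr rfl fun k hk => Finset.sum_congr rfl fun l hl => ?_
        simp only [mem_range] at hk hl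
        have f1 := fac q L y W hWpos hq a1 b1 c1 ha1 hb1 hc1 h1 k
        have f2 := fac q L y W hWpos hq a2 b2 c2 ha2 hb2 hc2 h2 l
        have f3 := fac q L y W hWpos hq a3 b3 c3 ha3 hb3 hc3 h3 (n-k-l)
        have hWk : ((a1*b1:ℕ):R)^k * (c1:R)^k = ((W:ℕ):R)^k := by
          rw [← mul_pow]; congr 1; rw [← h1]; push_cast; ring
        have hWl : ((a2*b2:ℕ):R)^l * (c2:R)^l = ((W:ℕ):R)^l := by
          rw [← mul_pow]; congr 1; rw [← h2]; push_cast; ring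
        have hWm : ((a3*b3:ℕ):R)^(n-k-l) * (c3:R)^(n-k-l) = ((W:ℕ):R)^(n-k-l) := by
          rw [← mul_pow]; congr 1; rw [← h3]; push_cast; ring
        have hWn : ((W:ℕ):R)^k * ((W:ℕ):R)^l * ((W:ℕ):R)^(n-k-l) = ((W:ℕ):R)^n := by
          rw [← pow_add, ← pow_add]; congr 1; omega
        calc ((a1*b1:ℕ):R) * ((a2*b2:ℕ):R) * ((a3*b3:ℕ):R) *
            (((n.choose k : R) * ((n-k).choose l : R)) *
              qB (q^c1) ((c1:R)*L) k ((a1:R)*y) *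
              qB (q^c2) ((c2:R)*L) l ((a2:R)*y) *
              qB (q^c3) ((c3:R)*L) (n-k-l) ((a3:R)*y) *
              (c1:R)^k * (c2:R)^l * (c3:R)^(n-k-l))
            = ((n.choose k : R) * ((n-k).choose l : R)) *
                (((a1*b1:ℕ):R) * qB (q^c1) ((c1:R)*L) k ((a1:R)*y)) *
                (((a2*b2:ℕ):R) * qB (q^c2) ((c2:R)*L) l ((a2:R)*y)) *
                (((a3*b3:ℕ):R) * qB (q^c3) ((c3:R)*L) (n-k-l) ((a3:R)*y)) *
                ((c1:R)^k * (c2:R)^l * (c3:R)^(n-k-l)) := by ring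
          _ = ((n.choose k : R) * ((n-k).choose l : R)) *
                (((a1*b1:ℕ):R)^k * ∑ i ∈ range (a1*b1), (q^c1)^i * qB (q^W) (((W:ℕ):R)*L) k
                  (algebraMap ℚ R (1/(b1:ℚ)) * y + algebraMap ℚ R ((i:ℚ)/((a1*b1:ℕ):ℚ)))) *
                (((a2*b2:ℕ):R)^l * ∑ j ∈ range (a2*b2), (q^c2)^j * qB (q^W) (((W:ℕ):R)*L) l
                  (algebraMap ℚ R (1/(b2:ℚ)) * y + algebraMap ℚ R ((j:ℚ)/((a2*b2:ℕ):ℚ)))) *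
                (((a3*b3:ℕ):R)^(n-k-l) * ∑ h ∈ range (a3*b3), (q^c3)^h
                  * qB (q^W) (((W:ℕ):R)*L) (n-k-l)
                    (algebraMap ℚ R (1/(b3:ℚ)) * y + algebraMap ℚ R ((h:ℚ)/((a3*b3:ℕ):ℚ)))) *
                ((c1:R)^k * (c2:R)^l * (c3:R)^(n-k-l)) := by rw [f1, f2, f3]
          _ = (((a1*b1:ℕ):R)^k * (c1:R)^k) * (((a2*b2:ℕ):R)^l * (c2:R)^l)
                * (((a3*b3:ℕ):R)^(n-k-l) * (c3:R)^(n-k-l))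
                * (((n.choose k : R) * ((n-k).choose l : R))
                  * (∑ i ∈ range (a1*b1), (q^c1)^i * qB (q^W) (((W:ℕ):R)*L) k
                      (algebraMap ℚ R (1/(b1:ℚ)) * y + algebraMap ℚ R ((i:ℚ)/((a1*b1:ℕ):ℚ))))
                  * (∑ j ∈ range (a2*b2), (q^c2)^j * qB (q^W) (((W:ℕ):R)*L) l
                      (algebraMap ℚ R (1/(b2:ℚ)) * y + algebraMap ℚ R ((j:ℚ)/((a2*b2:ℕ):ℚ))))
                  * (∑ h ∈ range (a3*b3), (q^c3)^h * qB (q^W) (((W:ℕ):R)*L) (n-k-l)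
                      (algebraMap ℚ R (1/(b3:ℚ)) * y
                        + algebraMap ℚ R ((h:ℚ)/((a3*b3:ℕ):ℚ))))) := by ring
          _ = ((W:ℕ):R)^n * (((n.choose k : R) * ((n-k).choose l : R))
                * (∑ i ∈ range (a1*b1), (q^c1)^i * qB (q^W) (((W:ℕ):R)*L) k
                    (algebraMap ℚ R (1/(b1:ℚ)) * y + algebraMap ℚ R ((i:ℚ)/((a1*b1:ℕ):ℚ))))
                * (∑ j ∈ range (a2*b2), (q^c2)^j * qB (q^W) (((W:ℕ):R)*L) l
                    (algebraMap ℚ R (1/(b2:ℚ)) * y + algebraMap ℚ R ((j:ℚ)/((a2*b2:ℕ):ℚ))))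
                * (∑ h ∈ range (a3*b3), (q^c3)^h * qB (q^W) (((W:ℕ):R)*L) (n-k-l)
                    (algebraMap ℚ R (1/(b3:ℚ)) * y
                      + algebraMap ℚ R ((h:ℚ)/((a3*b3:ℕ):ℚ))))) := by
              rw [hWk, hWl, hWm, hWn]
    _ = ((W:ℕ):R)^n * ∑ k ∈ range (n+1), ∑ l ∈ range (n-k+1),
          ∑ i ∈ range (a1*b1), ∑ j ∈ range (a2*b2), ∑ h ∈ range (a3*b3),
            ((n.choose k : R) * ((n-k).choose l : R))
              * ((q^c1)^i * qB (q^W) (((W:ℕ):R)*L) k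
                  (algebraMap ℚ R (1/(b1:ℚ)) * y + algebraMap ℚ R ((i:ℚ)/((a1*b1:ℕ):ℚ))))
              * ((q^c2)^j * qB (q^W) (((W:ℕ):R)*L) l
                  (algebraMap ℚ R (1/(b2:ℚ)) * y + algebraMap ℚ R ((j:ℚ)/((a2*b2:ℕ):ℚ))))
              * ((q^c3)^h * qB (q^W) (((W:ℕ):R)*L) (n-k-l)
                  (algebraMap ℚ R (1/(b3:ℚ)) * y + algebraMap ℚ R ((h:ℚ)/((a3*b3:ℕ):ℚ)))) := by
        rw [Finset.mul_sum]
        refine Finset.sum_congr rfl fun k _ => ?_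
        rw [Finset.mul_sum]
        refine Finset.sum_congr rfl fun l _ => ?_
        congr 1
        exact mul_sum3 (range (a1*b1)) (range (a2*b2)) (range (a3*b3)) _ _ _ _
    _ = ((W:ℕ):R)^n * ∑ i ∈ range (a1*b1), ∑ j ∈ range (a2*b2), ∑ h ∈ range (a3*b3),
          ∑ k ∈ range (n+1), ∑ l ∈ range (n-k+1),
            ((n.choose k : R) * ((n-k).choose l : R))
              * ((q^c1)^i * qB (q^W) (((W:ℕ):R)*L) k
                  (algebraMap ℚ R (1/(b1:ℚ)) * y + algebraMap ℚ R ((i:ℚ)/((a1*b1:ℕ):ℚ))))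
              * ((q^c2)^j * qB (q^W) (((W:ℕ):R)*L) l
                  (algebraMap ℚ R (1/(b2:ℚ)) * y + algebraMap ℚ R ((j:ℚ)/((a2*b2:ℕ):ℚ))))
              * ((q^c3)^h * qB (q^W) (((W:ℕ):R)*L) (n-k-l)
                  (algebraMap ℚ R (1/(b3:ℚ)) * y + algebraMap ℚ R ((h:ℚ)/((a3*b3:ℕ):ℚ)))) := by
        rw [swap5]
    _ = ((W:ℕ):R)^n * ∑ i ∈ range (a1*b1), ∑ j ∈ range (a2*b2), ∑ h ∈ range (a3*b3),
        q^(c1*i + c2*j + c3*h) *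
          ∑ k ∈ range (n+1), ∑ l ∈ range (n-k+1),
            ((n.choose k : R) * ((n-k).choose l : R)) * qb (q^W) (((W:ℕ):R)*L) k
              * qb (q^W) (((W:ℕ):R)*L) l
              * qB (q^W) (((W:ℕ):R)*L) (n-k-l)
                  (algebraMap ℚ R (1/(b1:ℚ) + 1/(b2:ℚ) + 1/(b3:ℚ)) * y
                    + algebraMap ℚ R (((c1*i + c2*j + c3*h : ℕ):ℚ)/((W:ℕ):ℚ))) := by
        refine congrArg _ (Finset.sum_congr rfl fun i _ => Finset.sum_congr rfl fun j _ =>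
          Finset.sum_congr rfl fun h _ => ?_)
        have hQ : (((c1*i+c2*j+c3*h:ℕ)):ℚ)/((W:ℕ):ℚ)
            = (i:ℚ)/((a1*b1:ℕ):ℚ) + (j:ℚ)/((a2*b2:ℕ):ℚ) + (h:ℚ)/((a3*b3:ℕ):ℚ) := by
          have e1 : ((W:ℕ):ℚ) = (c1:ℚ)*((a1*b1:ℕ):ℚ) := by rw [← h1]; push_cast; ring
          have e2 : ((W:ℕ):ℚ) = (c2:ℚ)*((a2*b2:ℕ):ℚ) := by rw [← h2]; push_cast; ring
          have e3 : ((W:ℕ):ℚ) = (c3:ℚ)*((a3*b3:ℕ):ℚ) := by rw [← h3]; push_cast; ring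
          have g1 : (i:ℚ)/((a1*b1:ℕ):ℚ) = ((c1:ℚ)*(i:ℚ))/((W:ℕ):ℚ) := by
            rw [e1, mul_div_mul_left _ _ hc1Q]
          have g2 : (j:ℚ)/((a2*b2:ℕ):ℚ) = ((c2:ℚ)*(j:ℚ))/((W:ℕ):ℚ) := by
            rw [e2, mul_div_mul_left _ _ hc2Q]
          have g3 : (h:ℚ)/((a3*b3:ℕ):ℚ) = ((c3:ℚ)*(h:ℚ))/((W:ℕ):ℚ) := by
            rw [e3, mul_div_mul_left _ _ hc3Q]
          rw [g1, g2, g3, ← add_div, ← add_div]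
          congr 1
          push_cast
          ring
        have harg : (algebraMap ℚ R (1/(b1:ℚ)) * y + algebraMap ℚ R ((i:ℚ)/((a1*b1:ℕ):ℚ)))
            + (algebraMap ℚ R (1/(b2:ℚ)) * y + algebraMap ℚ R ((j:ℚ)/((a2*b2:ℕ):ℚ)))
            + (algebraMap ℚ R (1/(b3:ℚ)) * y + algebraMap ℚ R ((h:ℚ)/((a3*b3:ℕ):ℚ)))
            = algebraMap ℚ R (1/(b1:ℚ) + 1/(b2:ℚ) + 1/(b3:ℚ)) * y
              + algebraMap ℚ R (((c1*i + c2*j + c3*h : ℕ):ℚ)/((W:ℕ):ℚ)) := by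
          rw [hQ, map_add, map_add, map_add, map_add]
          ring
        calc ∑ k ∈ range (n+1), ∑ l ∈ range (n-k+1),
              ((n.choose k : R) * ((n-k).choose l : R))
                * ((q^c1)^i * qB (q^W) (((W:ℕ):R)*L) k
                    (algebraMap ℚ R (1/(b1:ℚ)) * y + algebraMap ℚ R ((i:ℚ)/((a1*b1:ℕ):ℚ))))
                * ((q^c2)^j * qB (q^W) (((W:ℕ):R)*L) l
                    (algebraMap ℚ R (1/(b2:ℚ)) * y + algebraMap ℚ R ((j:ℚ)/((a2*b2:ℕ):ℚ))))
                * ((q^c3)^h * qB (q^W) (((W:ℕ):R)*L) (n-k-l)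
                    (algebraMap ℚ R (1/(b3:ℚ)) * y + algebraMap ℚ R ((h:ℚ)/((a3*b3:ℕ):ℚ))))
            = q^(c1*i + c2*j + c3*h) * ∑ k ∈ range (n+1), ∑ l ∈ range (n-k+1),
                ((n.choose k : R) * ((n-k).choose l : R))
                  * qB (q^W) (((W:ℕ):R)*L) k
                      (algebraMap ℚ R (1/(b1:ℚ)) * y + algebraMap ℚ R ((i:ℚ)/((a1*b1:ℕ):ℚ)))
                  * qB (q^W) (((W:ℕ):R)*L) l
                      (algebraMap ℚ R (1/(b2:ℚ)) * y + algebraMap ℚ R ((j:ℚ)/((a2*b2:ℕ):ℚ)))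
                  * qB (q^W) (((W:ℕ):R)*L) (n-k-l)
                      (algebraMap ℚ R (1/(b3:ℚ)) * y
                        + algebraMap ℚ R ((h:ℚ)/((a3*b3:ℕ):ℚ))) := by
              rw [Finset.mul_sum]
              refine Finset.sum_congr rfl fun k _ => ?_
              rw [Finset.mul_sum]
              refine Finset.sum_congr rfl fun l _ => ?_
              have hw : (q^c1)^i * (q^c2)^j * (q^c3)^h = q^(c1*i + c2*j + c3*h) := by
                rw [← pow_mul, ← pow_mul, ← pow_mul, ← pow_add, ← pow_add]
              rw [← hw]
              ring
          _ = q^(c1*i + c2*j + c3*h) * ∑ k ∈ range (n+1), ∑ l ∈ range (n-k+1),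
                ((n.choose k : R) * ((n-k).choose l : R)) * qb (q^W) (((W:ℕ):R)*L) k
                  * qb (q^W) (((W:ℕ):R)*L) l
                  * qB (q^W) (((W:ℕ):R)*L) (n-k-l)
                      ((algebraMap ℚ R (1/(b1:ℚ)) * y + algebraMap ℚ R ((i:ℚ)/((a1*b1:ℕ):ℚ)))
                        + (algebraMap ℚ R (1/(b2:ℚ)) * y + algebraMap ℚ R ((j:ℚ)/((a2*b2:ℕ):ℚ)))
                        + (algebraMap ℚ R (1/(b3:ℚ)) * y
                            + algebraMap ℚ R ((h:ℚ)/((a3*b3:ℕ):ℚ)))) := by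
              rw [Tsum]
          _ = q^(c1*i + c2*j + c3*h) *
                ∑ k ∈ range (n+1), ∑ l ∈ range (n-k+1),
                  ((n.choose k : R) * ((n-k).choose l : R)) * qb (q^W) (((W:ℕ):R)*L) k
                    * qb (q^W) (((W:ℕ):R)*L) l
                    * qB (q^W) (((W:ℕ):R)*L) (n-k-l)
                        (algebraMap ℚ R (1/(b1:ℚ) + 1/(b2:ℚ) + 1/(b3:ℚ)) * y
                          + algebraMap ℚ R (((c1*i + c2*j + c3*h : ℕ):ℚ)/((W:ℕ):ℚ))) := by
              rw [harg]

end Main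

theorem symm_cyclic_BBB {R : Type*} [CommRing R] [Algebra ℚ R] (q L : R)
    (hq : ∀ w : ℕ, 0 < w → IsUnit (q ^ w - 1)) (w1 w2 w3 : ℕ) (hw1 : 0 < w1) (hw2 : 0 < w2) (hw3 : 0 < w3) (y : R) (n : ℕ) :
    ∑ k ∈ Finset.range (n + 1), ∑ l ∈ Finset.range (n - k + 1),
        ((n.choose k : R) * ((n - k).choose l : R)) *
          qB (q ^ w3) ((w3 : R) * L) k ((w1 : R) * y) *
          qB (q ^ w1) ((w1 : R) * L) l ((w2 : R) * y) *
          qB (q ^ w2) ((w2 : R) * L) (n - k - l) ((w3 : R) * y) *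
          (w3 : R) ^ k * (w1 : R) ^ l * (w2 : R) ^ (n - k - l)
      = ∑ k ∈ Finset.range (n + 1), ∑ l ∈ Finset.range (n - k + 1),
          ((n.choose k : R) * ((n - k).choose l : R)) *
            qB (q ^ w2) ((w2 : R) * L) k ((w1 : R) * y) *
            qB (q ^ w1) ((w1 : R) * L) l ((w3 : R) * y) *
            qB (q ^ w3) ((w3 : R) * L) (n - k - l) ((w2 : R) * y) *
            (w2 : R) ^ k * (w1 : R) ^ l * (w3 : R) ^ (n - k - l) := by
  have hWpos : 0 < w1*w2*w3 := Nat.mul_pos (Nat.mul_pos hw1 hw2) hw3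
  have hL := side q L y hq n (w1*w2*w3) hWpos w1 w2 w3 w2 w3 w1 w3 w1 w2
    hw1 hw2 hw3 hw2 hw3 hw1 hw3 hw1 hw2 (by ring) (by ring) (by ring)
  have hR := side q L y hq n (w1*w2*w3) hWpos w1 w3 w2 w3 w2 w1 w2 w1 w3
    hw1 hw3 hw2 hw3 hw2 hw1 hw2 hw1 hw3 (by ring) (by ring) (by ring)
  rw [show w3*w1 = w1*w3 from Nat.mul_comm w3 w1] at hL
  rw [show w3*w2 = w2*w3 from Nat.mul_comm w3 w2,
    show w2*w1 = w1*w2 from Nat.mul_comm w2 w1,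
    show (1/(w3:ℚ) + 1/(w2:ℚ) + 1/(w1:ℚ)) = (1/(w2:ℚ) + 1/(w3:ℚ) + 1/(w1:ℚ)) from by ring] at hR
  set P : R := q^(w1*w2*w3) with hP
  set Λn : R := ((w1*w2*w3:ℕ):R)*L with hΛ
  set D : R → R := fun v => ∑ k ∈ range (n+1), ∑ l ∈ range (n-k+1),
    ((n.choose k : R) * ((n-k).choose l : R)) * qb P Λn k * qb P Λn l * qB P Λn (n-k-l) v
    with hD
  set y0 : R := algebraMap ℚ R (1/(w2:ℚ) + 1/(w3:ℚ) + 1/(w1:ℚ)) * y with hy0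
  have hL2 : ((w1*w2:ℕ):R) * ((w2*w3:ℕ):R) * ((w1*w3:ℕ):R) *
      (∑ k ∈ Finset.range (n + 1), ∑ l ∈ Finset.range (n - k + 1),
        ((n.choose k : R) * ((n - k).choose l : R)) *
          qB (q ^ w3) ((w3 : R) * L) k ((w1 : R) * y) *
          qB (q ^ w1) ((w1 : R) * L) l ((w2 : R) * y) *
          qB (q ^ w2) ((w2 : R) * L) (n - k - l) ((w3 : R) * y) *
          (w3 : R) ^ k * (w1 : R) ^ l * (w2 : R) ^ (n - k - l))
      = ((w1*w2*w3:ℕ):R)^n * ∑ i ∈ range (w1*w2), ∑ j ∈ range (w2*w3), ∑ h ∈ range (w1*w3),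
          q^(w3*i + w1*j + w2*h) *
            D (y0 + algebraMap ℚ R (((w3*i + w1*j + w2*h : ℕ):ℚ)/((w1*w2*w3:ℕ):ℚ))) := by
    rw [hD, hy0]
    exact hL
  have hR2 : ((w1*w3:ℕ):R) * ((w2*w3:ℕ):R) * ((w1*w2:ℕ):R) *
      (∑ k ∈ Finset.range (n + 1), ∑ l ∈ Finset.range (n - k + 1),
        ((n.choose k : R) * ((n - k).choose l : R)) *
          qB (q ^ w2) ((w2 : R) * L) k ((w1 : R) * y) *
          qB (q ^ w1) ((w1 : R) * L) l ((w3 : R) * y) *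
          qB (q ^ w3) ((w3 : R) * L) (n - k - l) ((w2 : R) * y) *
          (w2 : R) ^ k * (w1 : R) ^ l * (w3 : R) ^ (n - k - l))
      = ((w1*w2*w3:ℕ):R)^n * ∑ i ∈ range (w1*w3), ∑ j ∈ range (w2*w3), ∑ h ∈ range (w1*w2),
          q^(w2*i + w1*j + w3*h) *
            D (y0 + algebraMap ℚ R (((w2*i + w1*j + w3*h : ℕ):ℚ)/((w1*w2*w3:ℕ):ℚ))) := by
    rw [hD, hy0]
    exact hR
  have hS : ∑ i ∈ range (w1*w2), ∑ j ∈ range (w2*w3), ∑ h ∈ range (w1*w3),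
        q^(w3*i + w1*j + w2*h) *
          D (y0 + algebraMap ℚ R (((w3*i + w1*j + w2*h : ℕ):ℚ)/((w1*w2*w3:ℕ):ℚ)))
      = ∑ i ∈ range (w1*w3), ∑ j ∈ range (w2*w3), ∑ h ∈ range (w1*w2),
          q^(w2*i + w1*j + w3*h) *
            D (y0 + algebraMap ℚ R (((w2*i + w1*j + w3*h : ℕ):ℚ)/((w1*w2*w3:ℕ):ℚ))) :=
    calc ∑ i ∈ range (w1*w2), ∑ j ∈ range (w2*w3), ∑ h ∈ range (w1*w3),
          q^(w3*i + w1*j + w2*h) *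
            D (y0 + algebraMap ℚ R (((w3*i + w1*j + w2*h : ℕ):ℚ)/((w1*w2*w3:ℕ):ℚ)))
        = ∑ i ∈ range (w1*w2), ∑ h ∈ range (w1*w3), ∑ j ∈ range (w2*w3),
            q^(w3*i + w1*j + w2*h) *
              D (y0 + algebraMap ℚ R (((w3*i + w1*j + w2*h : ℕ):ℚ)/((w1*w2*w3:ℕ):ℚ))) :=
          Finset.sum_congr rfl fun i _ => Finset.sum_comm
      _ = ∑ h ∈ range (w1*w3), ∑ i ∈ range (w1*w2), ∑ j ∈ range (w2*w3),
            q^(w3*i + w1*j + w2*h) *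
              D (y0 + algebraMap ℚ R (((w3*i + w1*j + w2*h : ℕ):ℚ)/((w1*w2*w3:ℕ):ℚ))) :=
          Finset.sum_comm
      _ = ∑ h ∈ range (w1*w3), ∑ j ∈ range (w2*w3), ∑ i ∈ range (w1*w2),
            q^(w3*i + w1*j + w2*h) *
              D (y0 + algebraMap ℚ R (((w3*i + w1*j + w2*h : ℕ):ℚ)/((w1*w2*w3:ℕ):ℚ))) :=
          Finset.sum_congr rfl fun h _ => Finset.sum_comm
      _ = ∑ i ∈ range (w1*w3), ∑ j ∈ range (w2*w3), ∑ h ∈ range (w1*w2),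
            q^(w2*i + w1*j + w3*h) *
              D (y0 + algebraMap ℚ R (((w2*i + w1*j + w3*h : ℕ):ℚ)/((w1*w2*w3:ℕ):ℚ))) :=
          Finset.sum_congr rfl fun h _ => Finset.sum_congr rfl fun j _ =>
            Finset.sum_congr rfl fun i _ => by
              rw [show w3*i + w1*j + w2*h = w2*h + w1*j + w3*i from by ring]
  have hunit : ∀ m : ℕ, 0 < m → IsUnit ((m:ℕ):R) := by
    intro m hm
    have h1 : ((m:ℕ):R) = algebraMap ℚ R ((m:ℕ):ℚ) := (map_natCast _ _).symm
    rw [h1]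
    exact (isUnit_iff_ne_zero.mpr (Nat.cast_ne_zero.mpr hm.ne' : ((m:ℕ):ℚ) ≠ 0)).map
      (algebraMap ℚ R)
  have hu : IsUnit (((w1*w2:ℕ):R) * ((w2*w3:ℕ):R) * ((w1*w3:ℕ):R)) :=
    ((hunit _ (Nat.mul_pos hw1 hw2)).mul (hunit _ (Nat.mul_pos hw2 hw3))).mul
      (hunit _ (Nat.mul_pos hw1 hw3))
  refine hu.mul_left_cancel ?_

  rw [hL2, hS, ← hR2]
  rw [show ((w1*w2:ℕ):R) * ((w2*w3:ℕ):R) * ((w1*w3:ℕ):R)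
    = ((w1*w3:ℕ):R) * ((w2*w3:ℕ):R) * ((w1*w2:ℕ):R) from by ring]
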